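/- arXiv:1604.02308 — 3 statements merged into one kernel-verified Lean document; each statement's English description precedes it below -/
import Mathlib

section
/- Let c, K > 0 and let f, g, h : ℝ → ℝ be continuous. Suppose 0 < u̲ ≤ ū and 0 < v̲ ≤ v̄ satisfy the coupled upper–lower solution inequalities f(ū) − v̲ ≤ 0, h(v̄) + c·g(ū) ≤ 0, f(u̲) − v̄ ≥ 0, h(v̲) + c·g(u̲) ≥ 0. Suppose g(u) > 0 for all u ∈ [u̲, ū], g is nondecreasing on [u̲, ū], and for all u₁, u₂ ∈ [u̲, ū] and v₁, v₂ ∈ [v̲, v̄] one has |g(u₁)(f(u₁) − v₁) − g(u₂)(f(u₂) − v₂)| ≤ K(|u₁ − u₂| + |v₁ − v₂|) and |v₁h(v₁) + c·g(u₁)v₁ − v₂h(v₂) − c·g(u₂)v₂| ≤ K(|u₁ − u₂| + |v₁ − v₂|). Define sequences by ū⁽⁰⁾ = ū, u̲⁽⁰⁾ = u̲, v̄⁽⁰⁾ = v̄, v̲⁽⁰⁾ = v̲ and ū⁽ᵐ⁺¹⁾ = ū⁽ᵐ⁾ + g(ū⁽ᵐ⁾)[f(ū⁽ᵐ⁾)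 − v̲⁽ᵐ⁾]/K, u̲⁽ᵐ⁺¹⁾ = u̲⁽ᵐ⁾ + g(u̲⁽ᵐ⁾)[f(u̲⁽ᵐ⁾) − v̄⁽ᵐ⁾]/K, v̄⁽ᵐ⁺¹⁾ = v̄⁽ᵐ⁾ + v̄⁽ᵐ⁾[h(v̄⁽ᵐ⁾) + c·g(ū⁽ᵐ⁾)]/K, v̲⁽ᵐ⁺¹⁾ = v̲⁽ᵐ⁾ + v̲⁽ᵐ⁾[h(v̲⁽ᵐ⁾) + c·g(u̲⁽ᵐ⁾)]/K. Then for all m: (ū⁽ᵐ⁾) and (v̄⁽ᵐ⁾) are nonincreasing, (u̲⁽ᵐ⁾) and (v̲⁽ᵐ⁾) are nondecreasing, and u̲ ≤ u̲⁽ᵐ⁾ ≤ ū⁽ᵐ⁾ ≤ ū, v̲ ≤ v̲⁽ᵐ⁾ ≤ v̄⁽ᵐ⁾ ≤ v̄; moreover the limits ũ = lim ū⁽ᵐ⁾, ǔ = lim u̲⁽ᵐ⁾, ṽ = lim v̄⁽ᵐ⁾, v̌ = lim v̲⁽ᵐ⁾ exist, satisfy u̲ ≤ ǔ ≤ ũ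 ≤ ū and v̲ ≤ v̌ ≤ ṽ ≤ v̄, and satisfy the limit equations f(ũ) = v̌, h(ṽ) + c·g(ũ) = 0, f(ǔ) = ṽ, h(v̌) + c·g(ǔ) = 0. -/
open Filter Topology

/-- Monotone iteration scheme from the proof of Theorem 2.2: from a pair of coupled constant
upper and lower solutions, the iteration sequences are monotone, stay in the rectangle, converge,
and their limits satisfy the limit equations. -/
theorem stmt_1 (c K : ℝ) (hc : 0 < c) (hK : 0 < K)
    (f g h : ℝ → ℝ) (hf : Continuous f) (hg : Continuous g) (hh : Continuous h)
    (ul uu vl vu : ℝ)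
    (hul : 0 < ul) (huu : ul ≤ uu) (hvl : 0 < vl) (hvu : vl ≤ vu)
    (hineq1 : f uu - vl ≤ 0) (hineq2 : h vu + c * g uu ≤ 0)
    (hineq3 : 0 ≤ f ul - vu) (hineq4 : 0 ≤ h vl + c * g ul)
    (hgpos : ∀ u ∈ Set.Icc ul uu, 0 < g u)
    (hgmono : MonotoneOn g (Set.Icc ul uu))
    (hLip1 : ∀ u₁ ∈ Set.Icc ul uu, ∀ u₂ ∈ Set.Icc ul uu,
      ∀ v₁ ∈ Set.Icc vl vu, ∀ v₂ ∈ Set.Icc vl vu,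
      |g u₁ * (f u₁ - v₁) - g u₂ * (f u₂ - v₂)| ≤ K * (|u₁ - u₂| + |v₁ - v₂|))
    (hLip2 : ∀ u₁ ∈ Set.Icc ul uu, ∀ u₂ ∈ Set.Icc ul uu,
      ∀ v₁ ∈ Set.Icc vl vu, ∀ v₂ ∈ Set.Icc vl vu,
      |v₁ * h v₁ + c * g u₁ * v₁ - v₂ * h v₂ - c * g u₂ * v₂| ≤ K * (|u₁ - u₂| + |v₁ - v₂|))
    (U L V W : ℕ → ℝ)
    (hU0 : U 0 = uu) (hL0 : L 0 = ul) (hV0 : V 0 = vu) (hW0 : W 0 = vl)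
    (hUrec : ∀ m, U (m + 1) = U m + g (U m) * (f (U m) - W m) / K)
    (hLrec : ∀ m, L (m + 1) = L m + g (L m) * (f (L m) - V m) / K)
    (hVrec : ∀ m, V (m + 1) = V m + V m * (h (V m) + c * g (U m)) / K)
    (hWrec : ∀ m, W (m + 1) = W m + W m * (h (W m) + c * g (L m)) / K) :
    Antitone U ∧ Antitone V ∧ Monotone L ∧ Monotone W ∧
    (∀ m, ul ≤ L m ∧ L m ≤ U m ∧ U m ≤ uu) ∧
    (∀ m, vl ≤ W m ∧ W m ≤ V m ∧ V m ≤ vu) ∧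
    ∃ ut uc vt vc : ℝ,
      Tendsto U atTop (𝓝 ut) ∧ Tendsto L atTop (𝓝 uc) ∧
      Tendsto V atTop (𝓝 vt) ∧ Tendsto W atTop (𝓝 vc) ∧
      ul ≤ uc ∧ uc ≤ ut ∧ ut ≤ uu ∧ vl ≤ vc ∧ vc ≤ vt ∧ vt ≤ vu ∧
      f ut = vc ∧ h vt + c * g ut = 0 ∧ f uc = vt ∧ h vc + c * g uc = 0 := by
  have hKne : K ≠ 0 := ne_of_gt hK
  have hSl : ul ∈ Set.Icc ul uu := ⟨le_refl _, huu⟩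
  have hSu : uu ∈ Set.Icc ul uu := ⟨huu, le_refl _⟩
  have hTl : vl ∈ Set.Icc vl vu := ⟨le_refl _, hvu⟩
  have hTu : vu ∈ Set.Icc vl vu := ⟨hvu, le_refl _⟩
  -- F = u + g u * (f u - v)/K is monotone in u
  have Fmono : ∀ u₁ ∈ Set.Icc ul uu, ∀ u₂ ∈ Set.Icc ul uu, ∀ v ∈ Set.Icc vl vu,
      u₁ ≤ u₂ → u₁ + g u₁ * (f u₁ - v) / K ≤ u₂ + g u₂ * (f u₂ - v) / K := by
    intro u₁ h₁ u₂ h₂ v hv hle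
    have habs := hLip1 u₁ h₁ u₂ h₂ v hv v hv
    rw [sub_self, abs_zero, add_zero] at habs
    have h2 : |u₁ - u₂| = u₂ - u₁ := by
      rw [abs_sub_comm]; exact abs_of_nonneg (by linarith)
    rw [h2] at habs
    have hx := (abs_le.mp habs).2
    have hdiv : (g u₁ * (f u₁ - v) - g u₂ * (f u₂ - v)) / K ≤ u₂ - u₁ := by
      rw [div_le_iff₀ hK]; nlinarith
    rw [sub_div] at hdiv
    linarith
  -- F is antitone in v
  have Fanti : ∀ u ∈ Set.Icc ul uu, ∀ v₁ ∈ Set.Icc vl vu, ∀ v₂ ∈ Set.Icc vl vu,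
      v₁ ≤ v₂ → u + g u * (f u - v₂) / K ≤ u + g u * (f u - v₁) / K := by
    intro u hu v₁ _ v₂ _ hle
    have hgu := hgpos u hu
    have hmul : g u * (f u - v₂) ≤ g u * (f u - v₁) := by nlinarith
    have hdiv : g u * (f u - v₂) / K ≤ g u * (f u - v₁) / K := by
      rw [div_le_div_iff₀ hK hK]; nlinarith
    linarith
  -- G = v + v*(h v + c g u)/K is monotone in v
  have Gmonov : ∀ u ∈ Set.Icc ul uu, ∀ v₁ ∈ Set.Icc vl vu, ∀ v₂ ∈ Set.Icc vl vu,
      v₁ ≤ v₂ → v₁ + v₁ * (h v₁ + c * g u) / K ≤ v₂ + v₂ * (h v₂ + c * g u) / K := by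
    intro u hu v₁ h₁ v₂ h₂ hle
    have habs := hLip2 u hu u hu v₁ h₁ v₂ h₂
    rw [sub_self, abs_zero, zero_add] at habs
    have h2 : |v₁ - v₂| = v₂ - v₁ := by
      rw [abs_sub_comm]; exact abs_of_nonneg (by linarith)
    rw [h2] at habs
    have hx := (abs_le.mp habs).2
    have hring : v₁ * (h v₁ + c * g u) - v₂ * (h v₂ + c * g u) =
        v₁ * h v₁ + c * g u * v₁ - v₂ * h v₂ - c * g u * v₂ := by ring
    have hkey : v₁ * (h v₁ + c * g u) - v₂ * (h v₂ + c * g u) ≤ K * (v₂ - v₁) := by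
      rw [hring]; linarith
    have hdiv : (v₁ * (h v₁ + c * g u) - v₂ * (h v₂ + c * g u)) / K ≤ v₂ - v₁ := by
      rw [div_le_iff₀ hK]; nlinarith
    rw [sub_div] at hdiv
    linarith
  -- G is monotone in u
  have Gmonou : ∀ u₁ ∈ Set.Icc ul uu, ∀ u₂ ∈ Set.Icc ul uu, ∀ v ∈ Set.Icc vl vu,
      u₁ ≤ u₂ → v + v * (h v + c * g u₁) / K ≤ v + v * (h v + c * g u₂) / K := by
    intro u₁ h₁ u₂ h₂ v hv hle
    have hgle := hgmono h₁ h₂ hle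
    have hv0 : 0 < v := lt_of_lt_of_le hvl hv.1
    have hmul : v * (h v + c * g u₁) ≤ v * (h v + c * g u₂) := by
      nlinarith [mul_nonneg hv0.le (mul_nonneg hc.le (sub_nonneg.mpr hgle))]
    have hdiv : v * (h v + c * g u₁) / K ≤ v * (h v + c * g u₂) / K := by
      rw [div_le_div_iff₀ hK hK]; nlinarith
    linarith
  -- the main induction
  have Q : ∀ m, ul ≤ L m ∧ L m ≤ L (m+1) ∧ L (m+1) ≤ U (m+1) ∧ U (m+1) ≤ U m ∧ U m ≤ uu ∧
      vl ≤ W m ∧ W m ≤ W (m+1) ∧ W (m+1) ≤ V (m+1) ∧ V (m+1) ≤ V m ∧ V m ≤ vu := by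
    intro m
    induction m with
    | zero =>
      rw [hUrec 0, hLrec 0, hVrec 0, hWrec 0, hU0, hL0, hV0, hW0]
      have hg1 : 0 < g ul := hgpos ul hSl
      have hg2 : 0 < g uu := hgpos uu hSu
      have t1 : 0 ≤ g ul * (f ul - vu) / K := div_nonneg (by nlinarith) hK.le
      have t2 : g uu * (f uu - vl) / K ≤ 0 := by
        apply div_nonpos_of_nonpos_of_nonneg ?_ hK.le; nlinarith
      have t3 : 0 ≤ vl * (h vl + c * g ul) / K := div_nonneg (by nlinarith) hK.le
      have t4 : vu * (h vu + c * g uu) / K ≤ 0 := by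
        apply div_nonpos_of_nonpos_of_nonneg ?_ hK.le; nlinarith
      refine ⟨le_refl _, by linarith, ?_, by linarith, le_refl _,
        le_refl _, by linarith, ?_, by linarith, le_refl _⟩
      · calc ul + g ul * (f ul - vu) / K ≤ uu + g uu * (f uu - vu) / K :=
              Fmono ul hSl uu hSu vu hTu huu
          _ ≤ uu + g uu * (f uu - vl) / K := Fanti uu hSu vl hTl vu hTu hvu
      · calc vl + vl * (h vl + c * g ul) / K ≤ vl + vl * (h vl + c * g uu) / K :=
              Gmonou ul hSl uu hSu vl hTl huu
          _ ≤ vu + vu * (h vu + c * g uu) / K := Gmonov uu hSu vl hTl vu hTu hvu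
    | succ n ih =>
      obtain ⟨q1, q2, q3, q4, q5, q6, q7, q8, q9, q10⟩ := ih
      have hLn : L n ∈ Set.Icc ul uu := ⟨q1, by linarith⟩
      have hLn1 : L (n+1) ∈ Set.Icc ul uu := ⟨by linarith, by linarith⟩
      have hUn1 : U (n+1) ∈ Set.Icc ul uu := ⟨by linarith, by linarith⟩
      have hUn : U n ∈ Set.Icc ul uu := ⟨by linarith, q5⟩
      have hWn : W n ∈ Set.Icc vl vu := ⟨q6, by linarith⟩
      have hWn1 : W (n+1) ∈ Set.Icc vl vu := ⟨by linarith, by linarith⟩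
      have hVn1 : V (n+1) ∈ Set.Icc vl vu := ⟨by linarith, by linarith⟩
      have hVn : V n ∈ Set.Icc vl vu := ⟨by linarith, q10⟩
      refine ⟨by linarith, ?_, ?_, ?_, by linarith, by linarith, ?_, ?_, ?_, by linarith⟩
      · rw [hLrec n, hLrec (n+1)]
        calc L n + g (L n) * (f (L n) - V n) / K
            ≤ L n + g (L n) * (f (L n) - V (n+1)) / K :=
              Fanti (L n) hLn (V (n+1)) hVn1 (V n) hVn q9
          _ ≤ L (n+1) + g (L (n+1)) * (f (L (n+1)) - V (n+1)) / K :=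
              Fmono (L n) hLn (L (n+1)) hLn1 (V (n+1)) hVn1 q2
      · rw [hLrec (n+1), hUrec (n+1)]
        calc L (n+1) + g (L (n+1)) * (f (L (n+1)) - V (n+1)) / K
            ≤ U (n+1) + g (U (n+1)) * (f (U (n+1)) - V (n+1)) / K :=
              Fmono (L (n+1)) hLn1 (U (n+1)) hUn1 (V (n+1)) hVn1 q3
          _ ≤ U (n+1) + g (U (n+1)) * (f (U (n+1)) - W (n+1)) / K :=
              Fanti (U (n+1)) hUn1 (W (n+1)) hWn1 (V (n+1)) hVn1 q8
      · rw [hUrec (n+1)]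
        calc U (n+1) + g (U (n+1)) * (f (U (n+1)) - W (n+1)) / K
            ≤ U (n+1) + g (U (n+1)) * (f (U (n+1)) - W n) / K :=
              Fanti (U (n+1)) hUn1 (W n) hWn (W (n+1)) hWn1 q7
          _ ≤ U n + g (U n) * (f (U n) - W n) / K :=
              Fmono (U (n+1)) hUn1 (U n) hUn (W n) hWn q4
          _ = U (n+1) := (hUrec n).symm
      · rw [hWrec n, hWrec (n+1)]
        calc W n + W n * (h (W n) + c * g (L n)) / K
            ≤ W n + W n * (h (W n) + c * g (L (n+1))) / K :=
              Gmonou (L n) hLn (L (n+1)) hLn1 (W n) hWn q2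
          _ ≤ W (n+1) + W (n+1) * (h (W (n+1)) + c * g (L (n+1))) / K :=
              Gmonov (L (n+1)) hLn1 (W n) hWn (W (n+1)) hWn1 q7
      · rw [hWrec (n+1), hVrec (n+1)]
        calc W (n+1) + W (n+1) * (h (W (n+1)) + c * g (L (n+1))) / K
            ≤ W (n+1) + W (n+1) * (h (W (n+1)) + c * g (U (n+1))) / K :=
              Gmonou (L (n+1)) hLn1 (U (n+1)) hUn1 (W (n+1)) hWn1 q3
          _ ≤ V (n+1) + V (n+1) * (h (V (n+1)) + c * g (U (n+1))) / K :=
              Gmonov (U (n+1)) hUn1 (W (n+1)) hWn1 (V (n+1)) hVn1 q8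
      · rw [hVrec (n+1)]
        calc V (n+1) + V (n+1) * (h (V (n+1)) + c * g (U (n+1))) / K
            ≤ V (n+1) + V (n+1) * (h (V (n+1)) + c * g (U n)) / K :=
              Gmonou (U (n+1)) hUn1 (U n) hUn (V (n+1)) hVn1 q4
          _ ≤ V n + V n * (h (V n) + c * g (U n)) / K :=
              Gmonov (U n) hUn (V (n+1)) hVn1 (V n) hVn q9
          _ = V (n+1) := (hVrec n).symm
  have hUanti : Antitone U := antitone_nat_of_succ_le fun n => (Q n).2.2.2.1
  have hVanti : Antitone V := antitone_nat_of_succ_le fun n =>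
    (Q n).2.2.2.2.2.2.2.2.1
  have hLmono : Monotone L := monotone_nat_of_le_succ fun n => (Q n).2.1
  have hWmono : Monotone W := monotone_nat_of_le_succ fun n => (Q n).2.2.2.2.2.2.1
  have hbU : ∀ m, ul ≤ L m ∧ L m ≤ U m ∧ U m ≤ uu := by
    intro m
    obtain ⟨q1, q2, q3, q4, q5, _⟩ := Q m
    exact ⟨q1, by linarith, q5⟩
  have hbV : ∀ m, vl ≤ W m ∧ W m ≤ V m ∧ V m ≤ vu := by
    intro m
    obtain ⟨_, _, _, _, _, q6, q7, q8, q9, q10⟩ := Q m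
    exact ⟨q6, by linarith, q10⟩
  -- convergence
  have hUbb : BddBelow (Set.range U) := by
    refine ⟨ul, ?_⟩; rintro x ⟨m, rfl⟩
    obtain ⟨a, b, _⟩ := hbU m; linarith
  have hLba : BddAbove (Set.range L) := by
    refine ⟨uu, ?_⟩; rintro x ⟨m, rfl⟩
    obtain ⟨_, b, c'⟩ := hbU m; linarith
  have hVbb : BddBelow (Set.range V) := by
    refine ⟨vl, ?_⟩; rintro x ⟨m, rfl⟩
    obtain ⟨a, b, _⟩ := hbV m; linarith
  have hWba : BddAbove (Set.range W) := by
    refine ⟨vu, ?_⟩; rintro x ⟨m, rfl⟩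
    obtain ⟨_, b, c'⟩ := hbV m; linarith
  have hUt : Tendsto U atTop (𝓝 (⨅ m, U m)) := tendsto_atTop_ciInf hUanti hUbb
  have hLt : Tendsto L atTop (𝓝 (⨆ m, L m)) := tendsto_atTop_ciSup hLmono hLba
  have hVt : Tendsto V atTop (𝓝 (⨅ m, V m)) := tendsto_atTop_ciInf hVanti hVbb
  have hWt : Tendsto W atTop (𝓝 (⨆ m, W m)) := tendsto_atTop_ciSup hWmono hWba
  set ut := ⨅ m, U m
  set uc := ⨆ m, L m
  set vt := ⨅ m, V m
  set vc := ⨆ m, W m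
  have hutuu : ut ≤ uu := by
    have := ciInf_le hUbb 0; rw [hU0] at this; exact this
  have huluc : ul ≤ uc := by
    have := le_ciSup hLba 0; rw [hL0] at this; exact this
  have hucut : uc ≤ ut :=
    le_of_tendsto_of_tendsto' hLt hUt fun m => (hbU m).2.1
  have hvtvu : vt ≤ vu := by
    have := ciInf_le hVbb 0; rw [hV0] at this; exact this
  have hvlvc : vl ≤ vc := by
    have := le_ciSup hWba 0; rw [hW0] at this; exact this
  have hvcvt : vc ≤ vt :=
    le_of_tendsto_of_tendsto' hWt hVt fun m => (hbV m).2.1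
  have hutS : ut ∈ Set.Icc ul uu := ⟨le_trans huluc hucut, hutuu⟩
  have hucS : uc ∈ Set.Icc ul uu := ⟨huluc, le_trans hucut hutuu⟩
  -- limit equations
  have hU1 : Tendsto (fun m => U (m+1)) atTop (𝓝 ut) :=
    hUt.comp (tendsto_add_atTop_nat 1)
  have hL1 : Tendsto (fun m => L (m+1)) atTop (𝓝 uc) :=
    hLt.comp (tendsto_add_atTop_nat 1)
  have hV1 : Tendsto (fun m => V (m+1)) atTop (𝓝 vt) :=
    hVt.comp (tendsto_add_atTop_nat 1)
  have hW1 : Tendsto (fun m => W (m+1)) atTop (𝓝 vc) :=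
    hWt.comp (tendsto_add_atTop_nat 1)
  have hU2 : Tendsto (fun m => U m + g (U m) * (f (U m) - W m) / K) atTop
      (𝓝 (ut + g ut * (f ut - vc) / K)) :=
    hUt.add ((((hg.tendsto ut).comp hUt).mul
      (((hf.tendsto ut).comp hUt).sub hWt)).div_const K)
  have hL2 : Tendsto (fun m => L m + g (L m) * (f (L m) - V m) / K) atTop
      (𝓝 (uc + g uc * (f uc - vt) / K)) :=
    hLt.add ((((hg.tendsto uc).comp hLt).mul
      (((hf.tendsto uc).comp hLt).sub hVt)).div_const K)
  have hV2 : Tendsto (fun m => V m + V m * (h (V m) + c * g (U m)) / K) atTop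
      (𝓝 (vt + vt * (h vt + c * g ut) / K)) :=
    hVt.add ((hVt.mul (((hh.tendsto vt).comp hVt).add
      (((hg.tendsto ut).comp hUt).const_mul c))).div_const K)
  have hW2 : Tendsto (fun m => W m + W m * (h (W m) + c * g (L m)) / K) atTop
      (𝓝 (vc + vc * (h vc + c * g uc) / K)) :=
    hWt.add ((hWt.mul (((hh.tendsto vc).comp hWt).add
      (((hg.tendsto uc).comp hLt).const_mul c))).div_const K)
  have hEqU : ut = ut + g ut * (f ut - vc) / K :=
    tendsto_nhds_unique (hU1.congr fun m => hUrec m) hU2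
  have hEqL : uc = uc + g uc * (f uc - vt) / K :=
    tendsto_nhds_unique (hL1.congr fun m => hLrec m) hL2
  have hEqV : vt = vt + vt * (h vt + c * g ut) / K :=
    tendsto_nhds_unique (hV1.congr fun m => hVrec m) hV2
  have hEqW : vc = vc + vc * (h vc + c * g uc) / K :=
    tendsto_nhds_unique (hW1.congr fun m => hWrec m) hW2
  have hfut : f ut = vc := by
    have h0 : g ut * (f ut - vc) / K = 0 := by linarith
    have h1 : g ut * (f ut - vc) = 0 := (div_eq_zero_iff.mp h0).resolve_right hKne
    have h2 := (mul_eq_zero.mp h1).resolve_left (ne_of_gt (hgpos ut hutS))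
    linarith [sub_eq_zero.mp h2]
  have hfuc : f uc = vt := by
    have h0 : g uc * (f uc - vt) / K = 0 := by linarith
    have h1 : g uc * (f uc - vt) = 0 := (div_eq_zero_iff.mp h0).resolve_right hKne
    have h2 := (mul_eq_zero.mp h1).resolve_left (ne_of_gt (hgpos uc hucS))
    linarith [sub_eq_zero.mp h2]
  have hhvt : h vt + c * g ut = 0 := by
    have h0 : vt * (h vt + c * g ut) / K = 0 := by linarith
    have h1 : vt * (h vt + c * g ut) = 0 := (div_eq_zero_iff.mp h0).resolve_right hKne
    have hvt0 : vt ≠ 0 := ne_of_gt (by linarith : (0:ℝ) < vt)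
    exact (mul_eq_zero.mp h1).resolve_left hvt0
  have hhvc : h vc + c * g uc = 0 := by
    have h0 : vc * (h vc + c * g uc) / K = 0 := by linarith
    have h1 : vc * (h vc + c * g uc) = 0 := (div_eq_zero_iff.mp h0).resolve_right hKne
    have hvc0 : vc ≠ 0 := ne_of_gt (by linarith : (0:ℝ) < vc)
    exact (mul_eq_zero.mp h1).resolve_left hvc0
  exact ⟨hUanti, hVanti, hLmono, hWmono, hbU, hbV,
    ut, uc, vt, vc, hUt, hLt, hVt, hWt,
    huluc, hucut, hutuu, hvlvc, hvcvt, hvtvu, hfut, hhvt, hfuc, hhvc⟩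
end

section
/- Let β, d, p, r > 0 be real numbers, and define h(v) = β(d − v)(v − p)/(v + r) for v ≥ 0. If w > (dp + dr + pr)/r, then for every v > 0 with v ≠ w one has (h(v) − h(w))·(v − w) < 0. -/
/-- Remark 3.3(4): the rational strong Allee effect growth rate
`h(v) = β(d - v)(v - p)/(v + r)` with `β, d, p, r > 0` satisfies assumption (A₄) at any
`w > (dp + dr + pr)/r`. -/
theorem stmt_8 (β d p r : ℝ) (hβ : 0 < β) (hd : 0 < d) (hp : 0 < p) (hr : 0 < r)
    (h : ℝ → ℝ) (hh : ∀ v : ℝ, 0 ≤ v → h v = β * (d - v) * (v - p) / (v + r))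
    (w : ℝ) (hw : (d * p + d * r + p * r) / r < w) :
    ∀ v : ℝ, 0 < v → v ≠ w → (h v - h w) * (v - w) < 0 := by
  intro v hv hvw
  have hw0 : 0 < w := lt_trans (by positivity) hw
  have hrw : d * p + d * r + p * r < r * w := by
    rw [div_lt_iff₀ hr] at hw; linarith [hw]
  rw [hh v hv.le, hh w hw0.le]
  have hvr : (0:ℝ) < v + r := by linarith
  have hwr : (0:ℝ) < w + r := by linarith
  have hsub : v - w ≠ 0 := sub_ne_zero.mpr hvw
  have key : (β * (d - v) * (v - p) / (v + r) - β * (d - w) * (w - p) / (w + r)) * (v - w)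
      = -(β * (v - w) ^ 2 * (v * w + r * v + r * w - d * r - p * r - d * p))
        / ((v + r) * (w + r)) := by
    field_simp
    ring
  rw [key]
  apply div_neg_of_neg_of_pos
  · have hQ : 0 < v * w + r * v + r * w - d * r - p * r - d * p := by nlinarith
    have hsq : 0 < (v - w) ^ 2 := by positivity
    nlinarith [mul_pos (mul_pos hβ hsq) hQ]
  · positivity
end

section
/- Let a, b, e, m > 0 be real numbers with m·a > 1. Then for all real numbers u₁, u₂ with (a·m − 1)/m ≤ u₁ ≤ u₂ ≤ a, one has (1 + m·u₁)(a − u₁)/b − (1 + m·u₂)(a − u₂)/b + e·u₁/(1 + m·u₁) − e·u₂/(1 + m·u₂) ≥ ((m·a − 1)/b − e)·(u₂ − u₁). -/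
/-- Key inequality in the proof of Proposition 4.3: on the interval `[(am-1)/m, a]`, the
difference `h(f(u₁)) - c g(u₁) - h(f(u₂)) + c g(u₂)` for the Holling type-II model is bounded
below by `((ma - 1)/b - e)(u₂ - u₁)`. -/
theorem stmt_10 (a b e m : ℝ) (ha : 0 < a) (hb : 0 < b) (he : 0 < e) (hm : 0 < m)
    (hma : 1 < m * a) :
    ∀ u₁ u₂ : ℝ, (a * m - 1) / m ≤ u₁ → u₁ ≤ u₂ → u₂ ≤ a →
      ((m * a - 1) / b - e) * (u₂ - u₁) ≤
        (1 + m * u₁) * (a - u₁) / b - (1 + m * u₂) * (a - u₂) / b +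
          e * u₁ / (1 + m * u₁) - e * u₂ / (1 + m * u₂) := by
  intro u₁ u₂ h1 h2 h3
  have hu1 : m * a - 1 ≤ m * u₁ := by
    have := (div_le_iff₀ hm).mp h1
    nlinarith
  have hu2 : m * a - 1 ≤ m * u₂ := by nlinarith
  have hp1 : (0:ℝ) < 1 + m * u₁ := by linarith
  have hp2 : (0:ℝ) < 1 + m * u₂ := by linarith
  have hA : (m * a - 1) / b * (u₂ - u₁) ≤
      (1 + m * u₁) * (a - u₁) / b - (1 + m * u₂) * (a - u₂) / b := by
    rw [show (1 + m * u₁) * (a - u₁) / b - (1 + m * u₂) * (a - u₂) / b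
        = ((1 + m * u₁) * (a - u₁) - (1 + m * u₂) * (a - u₂)) / b from by ring,
      show (m * a - 1) / b * (u₂ - u₁) = (m * a - 1) * (u₂ - u₁) / b from by ring]
    gcongr
    nlinarith [mul_nonneg (sub_nonneg.mpr h2) (sub_nonneg.mpr hu1),
      mul_nonneg (sub_nonneg.mpr h2) (sub_nonneg.mpr hu2)]
  have hB : -(e * (u₂ - u₁)) ≤ e * u₁ / (1 + m * u₁) - e * u₂ / (1 + m * u₂) := by
    rw [div_sub_div _ _ (ne_of_gt hp1) (ne_of_gt hp2), le_div_iff₀ (by positivity)]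
    nlinarith [mul_nonneg (mul_nonneg he.le (sub_nonneg.mpr h2))
        (mul_nonneg (by nlinarith : (0:ℝ) ≤ m * u₁) (by nlinarith : (0:ℝ) ≤ m * u₂)),
      mul_nonneg (mul_nonneg he.le (sub_nonneg.mpr h2)) (by nlinarith : (0:ℝ) ≤ m * u₁),
      mul_nonneg (mul_nonneg he.le (sub_nonneg.mpr h2)) (by nlinarith : (0:ℝ) ≤ m * u₂)]
  have hexp : ((m * a - 1) / b - e) * (u₂ - u₁)
      = (m * a - 1) / b * (u₂ - u₁) - e * (u₂ - u₁) := by ring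
  linarith
end
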